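/- If the subshifts Σ and Σ' are topologically conjugate (i.e., there is a homeomorphism between them commuting with the shifts), then h_𝒞(Σ) = h_𝒞(Σ') and h*_𝒞(Σ) = h*_𝒞(Σ'). In particular the left constraint entropy, the extendable left constraint entropy, and their symmetric versions are invariants of topological conjugacy. -/

import Mathlib

set_option linter.unusedSectionVars false
set_option maxHeartbeats 1000000


open Filter Set MeasureTheory

namespace QFTPaper

variable {A : Type*} {B : Type*}

/-- The left shift on bi-infinite sequences over the alphabet `A`. -/
def shift (x : ℤ → A) : ℤ → A := fun n => x (n + 1)

/-- A subshift: a closed, shift-invariant subset of `A^ℤ`. -/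
def IsSubshift [TopologicalSpace A] (X : Set (ℤ → A)) : Prop :=
  IsClosed X ∧ shift '' X = X

/-- The finite word `w` occurs in `x` at position `k`. -/
def OccursAt (w : List A) (x : ℤ → A) (k : ℤ) : Prop :=
  ∀ i : Fin w.length, x (k + (i : ℕ)) = w.get i

/-- The language of `X`: words of length `n` occurring in elements of `X`
(at position `0`, which is no restriction by shift-invariance). -/
def Lang (X : Set (ℤ → A)) (n : ℕ) : Set (List A) :=
  { w | w.length = n ∧ ∃ x ∈ X, OccursAt w x 0 }

/-- Topological entropy of a subshift. -/
noncomputable def hTop (X : Set (ℤ → A)) : ℝ :=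
  limsup (fun n : ℕ => Real.log (Nat.card ↥(Lang X n)) / (n : ℝ)) atTop

/-- Follower set of the finite word `w = A₋ₙ…A₀` (listed from `A₋ₙ` to `A₀`):
the set of one-sided sequences `B₀B₁B₂…` with `B ∈ X` and `B₋ₙ…B₀ = A₋ₙ…A₀`,
realized by requiring `w` to occur in `B` at positions `0,…,n` and reading off
the tail of `B` starting at the position of the last letter of `w`.
For the empty word this gives `X₊` (by shift-invariance). -/
def fol (X : Set (ℤ → A)) (w : List A) : Set (ℕ → A) :=
  { y | ∃ B ∈ X, (∀ i : Fin w.length, B ((i : ℕ) : ℤ) = w.get i) ∧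
        ∀ k : ℕ, y k = B ((w.length : ℤ) - 1 + (k : ℤ)) }

/-- `w = A₋ₙ…A₀` is a left constraint:
`∅ ≠ fol(A₋ₙ…A₀) ⊊ fol(A₋ₙ₊₁…A₀)`. -/
def IsLeftConstraint (X : Set (ℤ → A)) (w : List A) : Prop :=
  w ≠ [] ∧ fol X w ≠ ∅ ∧ fol X w ⊂ fol X w.tail

/-- `𝒞(X, n)`: the set of left constraints of length `n`. -/
def LC (X : Set (ℤ → A)) (n : ℕ) : Set (List A) :=
  { w | w.length = n ∧ IsLeftConstraint X w }

/-- The left constraint entropy `h_𝒞(X) = limsup (1/n) log⁺ #𝒞(X,n)`. -/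
noncomputable def hC (X : Set (ℤ → A)) : ℝ :=
  limsup (fun n : ℕ => max 0 (Real.log (Nat.card ↥(LC X n))) / (n : ℝ)) atTop

/-- The time-reversed subshift `X̄`. -/
def rev (X : Set (ℤ → A)) : Set (ℤ → A) :=
  (fun x : ℤ → A => fun n : ℤ => x (-n)) '' X

/-- The symmetric constraint entropy `h_𝒮𝒞(X) = min (h_𝒞(X), h_𝒞(X̄))`. -/
noncomputable def hSC (X : Set (ℤ → A)) : ℝ := min (hC X) (hC (rev X))

/-- Subshift of quasi-finite type: `h_𝒮𝒞(X) < h_top(X)`. -/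
def IsQFT [TopologicalSpace A] (X : Set (ℤ → A)) : Prop :=
  IsSubshift X ∧ hSC X < hTop X

/-- The word `B₋ₘ…B₀` read off from a one-sided past `b` (where `b j = B₋ⱼ`). -/
def wordOf (b : ℕ → A) (m : ℕ) : List A :=
  (List.range (m + 1)).map fun j => b (m - j)

/-- An extendable left constraint: a left constraint `A₋ₙ…A₀` which admits a
one-sided past `B` extending it such that `B₋ₘ…B₀` is again a left constraint
for infinitely many `m`. -/
def IsExtendable (X : Set (ℤ → A)) (w : List A) : Prop :=
  IsLeftConstraint X w ∧
  ∃ b : ℕ → A, wordOf b (w.length - 1) = w ∧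
    ∀ N : ℕ, ∃ m, N ≤ m ∧ IsLeftConstraint X (wordOf b m)

/-- `𝒞*(X, n)`: the set of extendable left constraints of length `n`. -/
def ELC (X : Set (ℤ → A)) (n : ℕ) : Set (List A) :=
  { w | w.length = n ∧ IsExtendable X w }

/-- The extendable left constraint entropy `h*_𝒞(X)`. -/
noncomputable def hCstar (X : Set (ℤ → A)) : ℝ :=
  limsup (fun n : ℕ => Real.log (Nat.card ↥(ELC X n)) / (n : ℝ)) atTop

/-- `h*_𝒮𝒞(X) = min (h*_𝒞(X), h*_𝒞(X̄))`. -/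
noncomputable def hSCstar (X : Set (ℤ → A)) : ℝ := min (hCstar X) (hCstar (rev X))

/-- Subshift of weak quasi-finite type: `h*_𝒮𝒞(X) < h_top(X)`. -/
def IsWeakQFT [TopologicalSpace A] (X : Set (ℤ → A)) : Prop :=
  IsSubshift X ∧ hSCstar X < hTop X

/-- Subshift of finite type: defined by excluding a finite set of finite words. -/
def IsSFT (X : Set (ℤ → A)) : Prop :=
  ∃ F : Finset (List A), X = { x | ∀ w ∈ F, ∀ k : ℤ, ¬ OccursAt w x k }

/-- Sofic subshift: the image of an SFT under a continuous shift-commuting map. -/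
def IsSofic [TopologicalSpace A] (X : Set (ℤ → A)) : Prop :=
  ∃ (B : Type) (_ : Fintype B) (Y : Set (ℤ → B)) (π : (ℤ → B) → (ℤ → A)),
    IsSFT Y ∧
    (letI : TopologicalSpace B := ⊥
     Continuous π) ∧
    (∀ x : ℤ → B, π (shift x) = shift (π x)) ∧ π '' Y = X


/-- Topological conjugacy of subshifts: a homeomorphism commuting with the shifts. -/
def Conjugate [TopologicalSpace A] [TopologicalSpace B]
    (X : Set (ℤ → A)) (Y : Set (ℤ → B)) : Prop :=
  ∃ φ : X ≃ₜ Y, ∀ x x' : X, (x' : ℤ → A) = shift (x : ℤ → A) →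
    (φ x' : ℤ → B) = shift (φ x : ℤ → B)

/-- The cylinder of a word of length `n` placed at positions `0,…,n-1`. -/
def cylSet (n : ℕ) (w : Fin n → A) : Set (ℤ → A) :=
  { x | ∀ i : Fin n, x ((i : ℕ) : ℤ) = w i }

/-- Entropy of the partition of `A^ℤ` into cylinders of length `n`. -/
noncomputable def blockEntropy [Fintype A] [MeasurableSpace A]
    (μ : Measure (ℤ → A)) (n : ℕ) : ℝ :=
  ∑ w : Fin n → A, Real.negMulLog ((μ (cylSet n w)).toReal)

/-- Kolmogorov–Sinai entropy of a shift-invariant measure on `A^ℤ`,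
computed with the natural (generating) partition into cylinders. -/
noncomputable def KSEntropy [Fintype A] [MeasurableSpace A]
    (μ : Measure (ℤ → A)) : ℝ :=
  ⨅ n : ℕ, blockEntropy μ (n + 1) / (n + 1)

/-- A maximum measure: an ergodic shift-invariant Borel probability measure
carried by `X` whose Kolmogorov–Sinai entropy equals the topological entropy of `X`. -/
def IsMaxMeasure [Fintype A] [MeasurableSpace A]
    (X : Set (ℤ → A)) (μ : Measure (ℤ → A)) : Prop :=
  IsProbabilityMeasure μ ∧ μ Xᶜ = 0 ∧ Ergodic shift μ ∧ KSEntropy μ = hTop X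

/-- The number of points of `X` fixed by the `n`-th power of the shift. -/
noncomputable def perCount (X : Set (ℤ → A)) (n : ℕ) : ℕ :=
  Nat.card {x : ℤ → A | x ∈ X ∧ shift^[n] x = x}

section Aux

/-- shift by `k` -/
def shiftZ (k : ℤ) (x : ℤ → A) : ℤ → A := fun n => x (n + k)

lemma shiftZ_shiftZ (a b : ℤ) (x : ℤ → A) : shiftZ a (shiftZ b x) = shiftZ (a + b) x := by
  funext n; simp [shiftZ]; ring_nf

lemma shiftZ_zero (x : ℤ → A) : shiftZ 0 x = x := by funext n; simp [shiftZ]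

lemma shift_eq_shiftZ : (shift : (ℤ → A) → (ℤ → A)) = shiftZ 1 := rfl

variable {X : Set (ℤ → A)} [TopologicalSpace A]

lemma shiftZ_one_mem (hX : IsSubshift X) {x : ℤ → A} (hx : x ∈ X) : shiftZ 1 x ∈ X := by
  rw [← shift_eq_shiftZ]
  have := hX.2 ▸ Set.mem_image_of_mem shift hx
  exact this

lemma shiftZ_neg_one_mem (hX : IsSubshift X) {x : ℤ → A} (hx : x ∈ X) : shiftZ (-1) x ∈ X := by
  have : x ∈ shift '' X := hX.2.symm ▸ hx
  obtain ⟨w, hw, hwx⟩ := this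
  have : w = shiftZ (-1) x := by
    funext n
    have h2 : shift w (n + -1) = x (n + -1) := by rw [hwx]
    simp only [shiftZ]
    rw [← h2]
    simp only [shift]
    norm_num
  exact this ▸ hw

lemma shiftZ_mem (hX : IsSubshift X) (k : ℤ) {x : ℤ → A} (hx : x ∈ X) : shiftZ k x ∈ X := by
  induction k using Int.induction_on with
  | zero => rw [shiftZ_zero]; exact hx
  | succ n ih =>
      have := shiftZ_one_mem hX ih
      rwa [shiftZ_shiftZ, add_comm] at this
  | pred n ih =>
      have := shiftZ_neg_one_mem hX ih
      rw [shiftZ_shiftZ] at this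
      have h : (-1 : ℤ) + -n = -n - 1 := by ring
      rwa [h] at this

lemma getElem_index_eq {α : Type*} (w : List α) {i j : ℕ} (h : i = j) (hi : i < w.length) :
    w[i]'hi = w[j]'(h ▸ hi) := by subst h; rfl

/-- `x` realizes the word `w` ending at (right-anchored at) position `p`. -/
def RAt (x : ℤ → A) (w : List A) (p : ℤ) : Prop :=
  ∀ k : ℕ, (hk : k < w.length) → x (p - k) = w[w.length - 1 - k]'(by omega)

lemma RAt_tail {x : ℤ → A} {w : List A} {p : ℤ} (h : RAt x w p) : RAt x w.tail p := by
  intro k hk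
  have hkt : k < w.length - 1 := by have := hk; rw [List.length_tail] at this; omega
  have h2 := h k (by omega)
  rw [h2, List.getElem_tail]
  exact getElem_index_eq w (by rw [List.length_tail]; omega) _


lemma wordOf_length (b : ℕ → A) (m : ℕ) : (wordOf b m).length = m + 1 := by
  simp [wordOf]

lemma wordOf_ne_nil (b : ℕ → A) (m : ℕ) : wordOf b m ≠ [] := by
  intro h
  have := wordOf_length b m
  rw [h] at this
  simp at this

lemma wordOf_getElem (b : ℕ → A) (m k : ℕ) (hk : k < m + 1) :
    (wordOf b m)[k]'(by rw [wordOf_length]; omega) = b (m - k) := by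
  simp [wordOf]

lemma wordOf_tail (b : ℕ → A) (m : ℕ) : (wordOf b (m + 1)).tail = wordOf b m := by
  apply List.ext_getElem
  · rw [List.length_tail, wordOf_length, wordOf_length]; omega
  · intro i h1 h2
    rw [List.getElem_tail]
    rw [wordOf_getElem b (m+1) (i+1) (by rw [List.length_tail, wordOf_length] at h1; omega)]
    rw [wordOf_getElem b m i (by rw [wordOf_length] at h2; omega)]
    congr 1
    rw [List.length_tail, wordOf_length] at h1
    omega

lemma RAt_wordOf {x : ℤ → A} {b : ℕ → A} {m : ℕ} {p : ℤ} :
    RAt x (wordOf b m) p ↔ ∀ k : ℕ, k ≤ m → x (p - k) = b k := by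
  constructor
  · intro h k hk
    have h2 := h k (by rw [wordOf_length]; omega)
    rw [h2]
    have h3 := wordOf_getElem b m ((wordOf b m).length - 1 - k)
      (by rw [wordOf_length]; omega)
    rw [h3]
    congr 1
    rw [wordOf_length]
    omega
  · intro h k hk
    rw [wordOf_length] at hk
    rw [h k (by omega)]
    rw [wordOf_getElem b m ((wordOf b m).length - 1 - k) (by rw [wordOf_length]; omega)]
    congr 1
    rw [wordOf_length]
    omega

/-- Characterization of the follower set via right-anchored realizations. -/
lemma fol_char (hX : IsSubshift X) (w : List A) :
    fol X w = { y | ∃ x ∈ X, RAt x w 0 ∧ ∀ k : ℕ, y k = x (k : ℤ) } := by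
  ext y
  constructor
  · rintro ⟨Bx, hB, hocc, hy⟩
    refine ⟨shiftZ ((w.length : ℤ) - 1) Bx, shiftZ_mem hX _ hB, ?_, ?_⟩
    · intro k hk
      simp only [shiftZ]
      have h1 : (0 : ℤ) - k + ((w.length : ℤ) - 1) = ((w.length - 1 - k : ℕ) : ℤ) := by
        omega
      rw [h1]
      have := hocc ⟨w.length - 1 - k, by omega⟩
      simpa using this
    · intro k
      rw [hy k]
      simp only [shiftZ]
      congr 1
      ring
  · rintro ⟨x, hx, hra, hy⟩
    refine ⟨shiftZ (1 - (w.length : ℤ)) x, shiftZ_mem hX _ hx, ?_, ?_⟩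
    · intro i
      simp only [shiftZ]
      have hi : (i : ℕ) < w.length := i.2
      have h1 : ((i : ℕ) : ℤ) + (1 - (w.length : ℤ)) = 0 - ((w.length - 1 - (i:ℕ) : ℕ) : ℤ) := by
        omega
      rw [h1, hra (w.length - 1 - (i:ℕ)) (by omega)]
      congr 1
      omega
    · intro k
      rw [hy k]
      simp only [shiftZ]
      congr 1
      ring

lemma fol_nonempty_iff (hX : IsSubshift X) (w : List A) :
    fol X w ≠ ∅ ↔ ∃ x ∈ X, RAt x w 0 := by
  rw [fol_char hX w]
  rw [← Set.nonempty_iff_ne_empty]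
  constructor
  · rintro ⟨y, x, hx, hra, _⟩
    exact ⟨x, hx, hra⟩
  · rintro ⟨x, hx, hra⟩
    exact ⟨fun k => x (k : ℤ), x, hx, hra, fun _ => rfl⟩

lemma fol_subset_tail (hX : IsSubshift X) (w : List A) :
    fol X w ⊆ fol X w.tail := by
  rw [fol_char hX w, fol_char hX w.tail]
  rintro y ⟨x, hx, hra, hy⟩
  exact ⟨x, hx, RAt_tail hra, hy⟩

/-- unpacking a left constraint -/
lemma constraint_data (hX : IsSubshift X) {w : List A} (h : IsLeftConstraint X w) :
    (∃ x ∈ X, RAt x w 0) ∧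
    ∃ yh ∈ X, RAt yh w.tail 0 ∧
      ¬ ∃ u ∈ X, RAt u w 0 ∧ ∀ k : ℕ, yh (k : ℤ) = u (k : ℤ) := by
  obtain ⟨hw0, hne, hss⟩ := h
  constructor
  · exact (fol_nonempty_iff hX w).1 hne
  · obtain ⟨y, hyt, hynot⟩ := Set.exists_of_ssubset hss
    rw [fol_char hX w.tail] at hyt
    obtain ⟨yh, hyh, hrat, hyeq⟩ := hyt
    refine ⟨yh, hyh, hrat, ?_⟩
    rintro ⟨u, hu, hrau, huk⟩
    apply hynot
    rw [fol_char hX w]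
    refine ⟨u, hu, hrau, fun k => ?_⟩
    rw [hyeq k, huk k]

/-- building a non-left-constraint certificate: if a word (with nonempty follower set)
is not a left constraint then its follower set equals that of its tail. -/
lemma not_constraint_fol_eq (hX : IsSubshift X) {w : List A} (hw : w ≠ [])
    (hne : fol X w ≠ ∅) (h : ¬ IsLeftConstraint X w) :
    fol X w = fol X w.tail := by
  have hsub := fol_subset_tail hX w
  by_contra hne2
  exact h ⟨hw, hne, Set.ssubset_iff_subset_ne.2 ⟨hsub, hne2⟩⟩

end Aux

section CHL

variable [TopologicalSpace A] [TopologicalSpace B]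

/-- Uniform block radius for a continuous map on a closed subshift into a discrete space. -/
lemma exists_radius [Finite A] [DiscreteTopology A] [DiscreteTopology B]
    {X : Set (ℤ → A)} (hXc : IsClosed X) (q : ↥X → B) (hq : Continuous q) :
    ∃ r : ℕ, ∀ x x' : ↥X,
      (∀ t : ℤ, -(r:ℤ) ≤ t → t ≤ r → (x : ℤ → A) t = (x' : ℤ → A) t) → q x = q x' := by
  -- for each x, a finite determining set of coordinates
  have key : ∀ x : ↥X, ∃ I : Finset ℤ,
      ∀ x' : ↥X, (∀ j ∈ I, (x' : ℤ → A) j = (x : ℤ → A) j) → q x' = q x := by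
    intro x
    have hopen : q ⁻¹' {q x} ∈ nhds x :=
      hq.continuousAt.preimage_mem_nhds (by simp [isOpen_discrete {q x} |>.mem_nhds])
    rw [mem_nhds_subtype] at hopen
    obtain ⟨t, ht, hsub⟩ := hopen
    rw [nhds_pi, Filter.mem_pi'] at ht
    obtain ⟨I, s, hs, hst⟩ := ht
    refine ⟨I, fun x' hx' => ?_⟩
    have : (x' : ℤ → A) ∈ Set.pi ↑I s := by
      intro j hj
      rw [hx' j hj]
      exact mem_of_mem_nhds (hs j)
    exact hsub (hst this)
  choose I hI using key
  -- open cover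
  haveI : CompactSpace (ℤ → A) := by infer_instance
  have hcov : (Set.univ : Set ↥X) ⊆ ⋃ x : ↥X, {x' : ↥X | ∀ j ∈ I x, (x' : ℤ → A) j = (x : ℤ → A) j} := by
    intro x _
    exact Set.mem_iUnion.2 ⟨x, fun j _ => rfl⟩
  have hco : ∀ x : ↥X, IsOpen {x' : ↥X | ∀ j ∈ I x, (x' : ℤ → A) j = (x : ℤ → A) j} := by
    intro x
    have : {x' : ↥X | ∀ j ∈ I x, (x' : ℤ → A) j = (x : ℤ → A) j}
        = ⋂ j ∈ I x, (fun x' : ↥X => (x' : ℤ → A) j) ⁻¹' {(x : ℤ → A) j} := by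
      ext x'; simp [Set.mem_iInter]
    rw [this]
    apply isOpen_biInter_finset
    intro j _
    exact (((continuous_apply j).comp continuous_subtype_val)).isOpen_preimage _
      (isOpen_discrete _)
  haveI : CompactSpace ↥X := isCompact_iff_compactSpace.1 hXc.isCompact
  obtain ⟨s, hsub⟩ := isCompact_univ.elim_finite_subcover _ hco hcov
  refine ⟨s.sup (fun x => (I x).sup (fun j => j.natAbs)), fun x x' hagree => ?_⟩
  obtain ⟨x₀, hx₀s, hx₀⟩ : ∃ x₀ ∈ s, x ∈ {x' : ↥X | ∀ j ∈ I x₀, (x' : ℤ → A) j = (x₀ : ℤ → A) j} := by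
    have := hsub (Set.mem_univ x)
    simpa using this
  have h1 : q x = q x₀ := hI x₀ x hx₀
  have h2 : q x' = q x₀ := by
    apply hI x₀ x'
    intro j hj
    have hja : j.natAbs ≤ s.sup (fun x => (I x).sup (fun j => j.natAbs)) :=
      le_trans (Finset.le_sup hj)
        (Finset.le_sup (f := fun x => (I x).sup (fun j => j.natAbs)) hx₀s)
    rw [← hx₀ j hj]
    exact (hagree j (by omega) (by omega)).symm
  rw [h1, h2]

end CHL


section CDsec

variable [TopologicalSpace A] [TopologicalSpace B]

/-- Data of a conjugacy in sliding-block-code form. -/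
structure CD (X : Set (ℤ → A)) (Y : Set (ℤ → B)) where
  f : (ℤ → A) → (ℤ → B)
  g : (ℤ → B) → (ℤ → A)
  r : ℕ
  mapsF : ∀ x ∈ X, f x ∈ Y
  mapsG : ∀ y ∈ Y, g y ∈ X
  gf : ∀ x ∈ X, g (f x) = x
  fg : ∀ y ∈ Y, f (g y) = y
  blockF : ∀ i : ℤ, ∀ x ∈ X, ∀ x' ∈ X,
    (∀ t : ℤ, i - r ≤ t → t ≤ i + r → x t = x' t) → f x i = f x' i
  blockG : ∀ i : ℤ, ∀ y ∈ Y, ∀ y' ∈ Y,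
    (∀ t : ℤ, i - r ≤ t → t ≤ i + r → y t = y' t) → g y i = g y' i

/-- one half of the sliding block code construction -/
lemma half_block [Finite A] [DiscreteTopology A] [DiscreteTopology B]
    {X : Set (ℤ → A)} {Y : Set (ℤ → B)} (hX : IsSubshift X) (hY : IsSubshift Y)
    {f : (ℤ → A) → (ℤ → B)}
    (hmaps : ∀ x ∈ X, f x ∈ Y)
    (hcomm : ∀ x ∈ X, f (shiftZ 1 x) = shiftZ 1 (f x))
    (hcont : Continuous (fun x : ↥X => f (x : ℤ → A) 0)) :
    ∃ r : ℕ, ∀ i : ℤ, ∀ x ∈ X, ∀ x' ∈ X,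
      (∀ t : ℤ, i - r ≤ t → t ≤ i + r → x t = x' t) → f x i = f x' i := by
  obtain ⟨r, hr⟩ := exists_radius hX.1 (fun x : ↥X => f (x : ℤ → A) 0) hcont
  -- equivariance for all integer shifts
  have hcommZ : ∀ k : ℤ, ∀ x ∈ X, f (shiftZ k x) = shiftZ k (f x) := by
    intro k
    induction k using Int.induction_on with
    | zero => intro x _; rw [shiftZ_zero, shiftZ_zero]
    | succ n ih =>
        intro x hx
        have h1 : shiftZ ((n:ℤ) + 1) x = shiftZ 1 (shiftZ n x) := by
          rw [shiftZ_shiftZ]; ring_nf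
        rw [h1, hcomm _ (shiftZ_mem hX _ hx), ih x hx, shiftZ_shiftZ]
        ring_nf
    | pred n ih =>
        intro x hx
        have hx' : shiftZ (-(n:ℤ) - 1) x ∈ X := shiftZ_mem hX _ hx
        have h1 : shiftZ (-(n:ℤ)) x = shiftZ 1 (shiftZ (-(n:ℤ) - 1) x) := by
          rw [shiftZ_shiftZ]; ring_nf
        have h2 := hcomm _ hx'
        rw [← h1, ih x hx] at h2
        -- h2 : shiftZ (-n) (f x) = shiftZ 1 (f (shiftZ (-n-1) x))
        have h3 := congrArg (shiftZ (-1)) h2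
        rw [shiftZ_shiftZ, shiftZ_shiftZ] at h3
        have h4 : (-1 : ℤ) + 1 = 0 := by norm_num
        rw [h4, shiftZ_zero] at h3
        rw [← h3]
        congr 1
        ring
  refine ⟨r, fun i x hx x' hx' hagree => ?_⟩
  have hxi : shiftZ i x ∈ X := shiftZ_mem hX _ hx
  have hxi' : shiftZ i x' ∈ X := shiftZ_mem hX _ hx'
  have h0 : f (shiftZ i x) 0 = f (shiftZ i x') 0 := by
    have := hr ⟨shiftZ i x, hxi⟩ ⟨shiftZ i x', hxi'⟩ ?_
    · exact this
    · intro t h1 h2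
      simp only [shiftZ]
      exact hagree (t + i) (by omega) (by omega)
  have e1 := hcommZ i x hx
  have e2 := hcommZ i x' hx'
  rw [e1, e2] at h0
  simp only [shiftZ] at h0
  simpa using h0

/-- Existence of sliding block data from a topological conjugacy. -/
lemma exists_CD [Finite A] [Finite B] [DiscreteTopology A] [DiscreteTopology B]
    {X : Set (ℤ → A)} {Y : Set (ℤ → B)} (hX : IsSubshift X) (hY : IsSubshift Y)
    (h : Conjugate X Y) (hne : X.Nonempty) : Nonempty (CD X Y) := by
  obtain ⟨φ, hφ⟩ := h
  obtain ⟨x₀, hx₀⟩ := hne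
  classical
  set f : (ℤ → A) → (ℤ → B) := fun x => if h : x ∈ X then (φ ⟨x, h⟩ : ℤ → B)
    else (φ ⟨x₀, hx₀⟩ : ℤ → B) with hf
  set g : (ℤ → B) → (ℤ → A) := fun y => if h : y ∈ Y then (φ.symm ⟨y, h⟩ : ℤ → A)
    else x₀ with hg
  have hfx : ∀ x (hx : x ∈ X), f x = (φ ⟨x, hx⟩ : ℤ → B) := by
    intro x hx; simp [hf, dif_pos hx]
  have hgy : ∀ y (hy : y ∈ Y), g y = (φ.symm ⟨y, hy⟩ : ℤ → A) := by
    intro y hy; simp [hg, dif_pos hy]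
  have mapsF : ∀ x ∈ X, f x ∈ Y := fun x hx => by rw [hfx x hx]; exact (φ ⟨x, hx⟩).2
  have mapsG : ∀ y ∈ Y, g y ∈ X := fun y hy => by rw [hgy y hy]; exact (φ.symm ⟨y, hy⟩).2
  have gf : ∀ x ∈ X, g (f x) = x := by
    intro x hx
    rw [hfx x hx, hgy _ (φ ⟨x, hx⟩).2]
    have : (⟨(φ ⟨x, hx⟩ : ℤ → B), (φ ⟨x, hx⟩).2⟩ : ↥Y) = φ ⟨x, hx⟩ := rfl
    rw [this, Homeomorph.symm_apply_apply]
  have fg : ∀ y ∈ Y, f (g y) = y := by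
    intro y hy
    rw [hgy y hy, hfx _ (φ.symm ⟨y, hy⟩).2]
    have : (⟨(φ.symm ⟨y, hy⟩ : ℤ → A), (φ.symm ⟨y, hy⟩).2⟩ : ↥X) = φ.symm ⟨y, hy⟩ := rfl
    rw [this, Homeomorph.apply_symm_apply]
  have commF : ∀ x ∈ X, f (shiftZ 1 x) = shiftZ 1 (f x) := by
    intro x hx
    have hsx : shiftZ 1 x ∈ X := shiftZ_mem hX 1 hx
    rw [hfx x hx, hfx _ hsx]
    exact hφ ⟨x, hx⟩ ⟨shiftZ 1 x, hsx⟩ rfl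
  have commG : ∀ y ∈ Y, g (shiftZ 1 y) = shiftZ 1 (g y) := by
    intro y hy
    have hsy : shiftZ 1 y ∈ Y := shiftZ_mem hY 1 hy
    have h1 : f (g y) = y := fg y hy
    have h2 : f (shiftZ 1 (g y)) = shiftZ 1 y := by
      rw [commF _ (mapsG y hy), h1]
    have h3 : g (f (shiftZ 1 (g y))) = shiftZ 1 (g y) :=
      gf _ (shiftZ_mem hX 1 (mapsG y hy))
    rw [h2] at h3
    exact h3
  have contF : Continuous (fun x : ↥X => f (x : ℤ → A) 0) := by
    have : (fun x : ↥X => f (x : ℤ → A) 0) = fun x : ↥X => (φ x : ℤ → B) 0 := by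
      funext x
      rw [hfx _ x.2]
    rw [this]
    exact (continuous_apply 0).comp (continuous_subtype_val.comp φ.continuous)
  have contG : Continuous (fun y : ↥Y => g (y : ℤ → B) 0) := by
    have : (fun y : ↥Y => g (y : ℤ → B) 0) = fun y : ↥Y => (φ.symm y : ℤ → A) 0 := by
      funext y
      rw [hgy _ y.2]
    rw [this]
    exact (continuous_apply 0).comp (continuous_subtype_val.comp φ.symm.continuous)
  obtain ⟨r1, hr1⟩ := half_block hX hY mapsF commF contF
  obtain ⟨r2, hr2⟩ := half_block hY hX mapsG commG contG
  refine ⟨⟨f, g, max r1 r2, mapsF, mapsG, gf, fg, ?_, ?_⟩⟩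
  · intro i x hx x' hx' hagree
    exact hr1 i x hx x' hx' (fun t h1 h2 => hagree t (by omega) (by omega))
  · intro i y hy y' hy' hagree
    exact hr2 i y hy y' hy' (fun t h1 h2 => hagree t (by omega) (by omega))

end CDsec

section Core

variable [TopologicalSpace A] [TopologicalSpace B]
variable {X : Set (ℤ → A)} {Y : Set (ℤ → B)}

lemma RAt_tail_get {x : ℤ → B} {w : List B} {p : ℤ} (h : RAt x w.tail p) :
    ∀ k : ℕ, (hk : k < w.length - 1) → x (p - k) = w[w.length - 1 - k]'(by omega) := by
  intro k hk
  have e := h k (by rw [List.length_tail]; omega)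
  rw [e, List.getElem_tail]
  exact getElem_index_eq w (by rw [List.length_tail]; omega) _

/-- the past of `g ys` read off from position `-r` backwards -/
def pastOf [TopologicalSpace A] [TopologicalSpace B] {X : Set (ℤ → A)} {Y : Set (ℤ → B)}
    (D : CD X Y) (ys : ℤ → B) : ℕ → A :=
  fun k => D.g ys (-(D.r : ℤ) - k)

/-- **Core lemma**: every left constraint of `Y` forces a left constraint of `X`
along the past of (the preimage of) any point realizing it. -/
lemma core (hX : IsSubshift X) (hY : IsSubshift Y) (D : CD X Y)
    {n : ℕ} (hn : 4 * D.r + 4 ≤ n) {v : List B} (hvl : v.length = n)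
    {ys : ℤ → B} (hys : ys ∈ Y) (hra : RAt ys v 0)
    {yh : ℤ → B} (hyh : yh ∈ Y) (hrat : RAt yh v.tail 0)
    (hnot : ¬ ∃ u ∈ Y, RAt u v 0 ∧ ∀ k : ℕ, yh (k : ℤ) = u (k : ℤ)) :
    ∃ j : ℕ, 1 ≤ j ∧ j ≤ 2 * D.r + 1 ∧
      IsLeftConstraint X (wordOf (pastOf D ys) (n - 2 - 2 * D.r + j)) := by
  by_contra hcon
  push_neg at hcon
  set r := D.r with hrdef
  set c := pastOf D ys with hc
  have hxs : D.g ys ∈ X := D.mapsG ys hys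
  have hxh : D.g yh ∈ X := D.mapsG yh hyh
  -- nonemptiness of the follower set of each word along the past
  have hWne : ∀ M : ℕ, ∃ x ∈ X, RAt x (wordOf c M) 0 := by
    intro M
    refine ⟨shiftZ (-(r : ℤ)) (D.g ys), shiftZ_mem hX _ hxs, ?_⟩
    rw [RAt_wordOf]
    intro k hk
    show D.g ys (0 - (k : ℤ) + -(r : ℤ)) = c k
    rw [hc]
    show D.g ys (0 - (k : ℤ) + -(r : ℤ)) = D.g ys (-(r : ℤ) - k)
    congr 1
    ring
  -- the chain of follower set equalities
  have hchain : ∀ j : ℕ, j ≤ 2 * r + 1 →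
      fol X (wordOf c (n - 2 - 2 * r + j)) = fol X (wordOf c (n - 2 - 2 * r)) := by
    intro j
    induction j with
    | zero => intro _; rfl
    | succ j ih =>
        intro hj
        have hnc := hcon (j + 1) (by omega) (by omega)
        have hne : fol X (wordOf c (n - 2 - 2 * r + (j + 1))) ≠ ∅ := by
          rw [fol_nonempty_iff hX]; exact hWne _
        have heq := not_constraint_fol_eq hX (wordOf_ne_nil _ _) hne hnc
        have htl : (wordOf c (n - 2 - 2 * r + (j + 1))).tail = wordOf c (n - 2 - 2 * r + j) := by
          have h5 : n - 2 - 2 * r + (j + 1) = (n - 2 - 2 * r + j) + 1 := by omega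
          rw [h5, wordOf_tail]
        rw [heq, htl, ih (by omega)]
  -- agreement of ys and yh on the common past
  have hA1 : ∀ t : ℤ, -(n : ℤ) + 2 ≤ t → t ≤ 0 → ys t = yh t := by
    intro t h1 h2
    have hkt : (((-t).toNat : ℕ) : ℤ) = -t := Int.toNat_of_nonneg (by omega)
    set k : ℕ := (-t).toNat
    have hk1 : k < n - 1 := by omega
    have e1 := hra k (by rw [hvl]; omega)
    have e2 := RAt_tail_get hrat k (by rw [hvl]; omega)
    have ht : t = 0 - (k : ℤ) := by omega
    rw [ht, e1, e2]
  have hD1 : ∀ t : ℤ, -(n : ℤ) + 2 + r ≤ t → t ≤ -(r : ℤ) → D.g ys t = D.g yh t := by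
    intro t h1 h2
    apply D.blockG t ys hys yh hyh
    intro s hs1 hs2
    exact hA1 s (by omega) (by omega)
  -- the future of (g yh) from -r follows the short word of the past of ys
  have hz0 : (fun k : ℕ => D.g yh ((k : ℤ) - r)) ∈ fol X (wordOf c (n - 2 - 2 * r)) := by
    rw [fol_char hX]
    refine ⟨shiftZ (-(r : ℤ)) (D.g yh), shiftZ_mem hX _ hxh, ?_, ?_⟩
    · rw [RAt_wordOf]
      intro k hk
      have hd := hD1 (-(r : ℤ) - k) (by omega) (by omega)
      show D.g yh (0 - (k : ℤ) + -(r : ℤ)) = c k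
      rw [hc]
      show D.g yh (0 - (k : ℤ) + -(r : ℤ)) = D.g ys (-(r : ℤ) - k)
      rw [hd]
      congr 1
      ring
    · intro k
      show D.g yh ((k : ℤ) - r) = D.g yh ((k : ℤ) + -(r : ℤ))
      rw [sub_eq_add_neg]
  have hz1 : (fun k : ℕ => D.g yh ((k : ℤ) - r)) ∈ fol X (wordOf c (n - 1)) := by
    have h1 := hchain (2 * r + 1) le_rfl
    have h2 : n - 2 - 2 * r + (2 * r + 1) = n - 1 := by omega
    rw [h2] at h1
    rw [h1]
    exact hz0
  rw [fol_char hX] at hz1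
  obtain ⟨xb, hxb, hrb, hzb⟩ := hz1
  have hrb' : ∀ k : ℕ, k ≤ n - 1 → xb (0 - (k : ℤ)) = c k := RAt_wordOf.1 hrb
  -- the glued point
  have hP1 : ∀ t : ℤ, -(r : ℤ) ≤ t → shiftZ (r : ℤ) xb t = D.g yh t := by
    intro t ht
    have hkt : (((t + r).toNat : ℕ) : ℤ) = t + r := Int.toNat_of_nonneg (by omega)
    set k : ℕ := (t + r).toNat
    have h1 := hzb k
    show xb (t + r) = D.g yh t
    have h2 : t + (r : ℤ) = (k : ℤ) := by omega
    rw [h2, ← h1]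
    show D.g yh ((k : ℤ) - r) = D.g yh t
    congr 1
    omega
  have hP2 : ∀ t : ℤ, -(n : ℤ) + 1 - r ≤ t → t ≤ -(r : ℤ) → shiftZ (r : ℤ) xb t = D.g ys t := by
    intro t h1 h2
    have hkt : (((-(t + r)).toNat : ℕ) : ℤ) = -(t + r) := Int.toNat_of_nonneg (by omega)
    set k : ℕ := (-(t + r)).toNat
    have hkle : k ≤ n - 1 := by omega
    have e := hrb' k hkle
    show xb (t + r) = D.g ys t
    have h3 : t + (r : ℤ) = 0 - (k : ℤ) := by omega
    rw [h3, e, hc]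
    show D.g ys (-(r : ℤ) - k) = D.g ys t
    congr 1
    omega
  have hP13 : ∀ t : ℤ, -(3 * (r : ℤ)) ≤ t → shiftZ (r : ℤ) xb t = D.g yh t := by
    intro t ht
    rcases le_or_gt t (-(r : ℤ)) with h | h
    · rw [hP2 t (by omega) h]
      exact hD1 t (by omega) h
    · exact hP1 t (by omega)
  have hxsharp : shiftZ (r : ℤ) xb ∈ X := shiftZ_mem hX _ hxb
  apply hnot
  refine ⟨D.f (shiftZ (r : ℤ) xb), D.mapsF _ hxsharp, ?_, ?_⟩
  · -- RAt (f x♯) v 0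
    intro k hk
    rw [hvl] at hk
    rcases le_or_gt k (2 * r) with hsmall | hbig
    · have hbl : D.f (shiftZ (r : ℤ) xb) (0 - (k : ℤ)) = D.f (D.g yh) (0 - (k : ℤ)) := by
        apply D.blockF _ _ hxsharp _ hxh
        intro t ht1 ht2
        exact hP13 t (by omega)
      rw [hbl, D.fg yh hyh]
      exact RAt_tail_get hrat k (by rw [hvl]; omega)
    · have hbl : D.f (shiftZ (r : ℤ) xb) (0 - (k : ℤ)) = D.f (D.g ys) (0 - (k : ℤ)) := by
        apply D.blockF _ _ hxsharp _ hxs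
        intro t ht1 ht2
        exact hP2 t (by omega) (by omega)
      rw [hbl, D.fg ys hys]
      exact hra k (by rw [hvl]; omega)
  · intro k
    have hbl : D.f (shiftZ (r : ℤ) xb) (k : ℤ) = D.f (D.g yh) (k : ℤ) := by
      apply D.blockF _ _ hxsharp _ hxh
      intro t ht1 ht2
      exact hP13 t (by omega)
    rw [hbl, D.fg yh hyh]

end Core

section Det

variable [TopologicalSpace A] [TopologicalSpace B]
variable {X : Set (ℤ → A)} {Y : Set (ℤ → B)}

/-- Determination: the middle letters of a word are determined by the
corresponding word of the past. -/
lemma det (D : CD X Y) {n n' M : ℕ} {v v' : List B} (hvl : v.length = n) (hvl' : v'.length = n')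
    {ys ys' : ℤ → B} (hys : ys ∈ Y) (hra : RAt ys v 0) (hys' : ys' ∈ Y) (hra' : RAt ys' v' 0)
    (hW : wordOf (pastOf D ys) M = wordOf (pastOf D ys') M) :
    ∀ k : ℕ, 2 * D.r ≤ k → k ≤ M → k < n → k < n' →
      v[n - 1 - k]? = v'[n' - 1 - k]? := by
  subst hvl hvl'
  intro k h2r hM hkn hkn'
  have hcc : ∀ i : ℕ, i ≤ M → pastOf D ys i = pastOf D ys' i := by
    intro i hi
    have h1 : (wordOf (pastOf D ys) M)[M - i]'(by rw [wordOf_length]; omega)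
        = (wordOf (pastOf D ys') M)[M - i]'(by rw [wordOf_length]; omega) := by
      simp only [hW]
    rw [wordOf_getElem _ _ _ (by omega), wordOf_getElem _ _ _ (by omega)] at h1
    have h2 : M - (M - i) = i := by omega
    rwa [h2] at h1
  have hxx : ∀ t : ℤ, -(D.r : ℤ) - M ≤ t → t ≤ -(D.r : ℤ) → D.g ys t = D.g ys' t := by
    intro t h1 h2
    have hkt : (((-(t + D.r)).toNat : ℕ) : ℤ) = -(t + D.r) := Int.toNat_of_nonneg (by omega)
    set i : ℕ := (-(t + D.r)).toNat
    have hi : i ≤ M := by omega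
    have h3 := hcc i hi
    have ht : t = -(D.r : ℤ) - i := by omega
    rw [ht]
    exact h3
  have hbl : D.f (D.g ys) (0 - (k : ℤ)) = D.f (D.g ys') (0 - (k : ℤ)) := by
    apply D.blockF _ _ (D.mapsG ys hys) _ (D.mapsG ys' hys')
    intro t ht1 ht2
    exact hxx t (by omega) (by omega)
  rw [D.fg ys hys, D.fg ys' hys'] at hbl
  have e1 := hra k (by omega)
  have e2 := hra' k (by omega)
  rw [List.getElem?_eq_getElem (by omega), List.getElem?_eq_getElem (by omega)]
  exact congrArg some (by rw [← e1, ← e2]; exact hbl)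

end Det

section Counting

lemma finite_words {C : Set (List A)} {m : ℕ} [Fintype A] (h : ∀ v ∈ C, v.length = m) :
    Finite ↥C := by
  apply Finite.of_injective (fun v : ↥C => (fun i : Fin m => (v : List A)[(i : ℕ)]?))
  intro v v' hvv
  apply Subtype.ext
  apply List.ext_getElem?
  intro i
  rcases lt_or_ge i m with hi | hi
  · exact congrFun hvv ⟨i, hi⟩
  · rw [List.getElem?_eq_none (by rw [h v.1 v.2]; omega),
      List.getElem?_eq_none (by rw [h v'.1 v'.2]; omega)]

lemma card_words_le {C : Set (List A)} {m : ℕ} [Fintype A] (h : ∀ v ∈ C, v.length = m) :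
    Nat.card ↥C ≤ (Fintype.card A + 1) ^ m := by
  have hinj : Function.Injective (fun v : ↥C => (fun i : Fin m => (v : List A)[(i : ℕ)]?)) := by
    intro v v' hvv
    apply Subtype.ext
    apply List.ext_getElem?
    intro i
    rcases lt_or_ge i m with hi | hi
    · exact congrFun hvv ⟨i, hi⟩
    · rw [List.getElem?_eq_none (by rw [h v.1 v.2]; omega),
        List.getElem?_eq_none (by rw [h v'.1 v'.2]; omega)]
  calc Nat.card ↥C ≤ Nat.card (Fin m → Option A) := Nat.card_le_card_of_injective _ hinj
  _ = (Fintype.card A + 1) ^ m := by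
      rw [Nat.card_fun, Nat.card_eq_fintype_card (α := Option A), Fintype.card_option,
        Nat.card_eq_fintype_card (α := Fin m), Fintype.card_fin]

lemma card_sigma_le {ι : Type*} [Fintype ι] (S : ι → Type*) [∀ i, Finite (S i)] (c : ℕ)
    (hc : ∀ i, Nat.card (S i) ≤ c) : Nat.card (Σ i, S i) ≤ Fintype.card ι * c := by
  classical
  letI : ∀ i, Fintype (S i) := fun i => Fintype.ofFinite _
  rw [Nat.card_eq_fintype_card, Fintype.card_sigma]
  calc ∑ i, Fintype.card (S i) ≤ ∑ _i : ι, c :=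
        Finset.sum_le_sum (fun i _ => by rw [← Nat.card_eq_fintype_card]; exact hc i)
  _ = Fintype.card ι * c := by rw [Finset.sum_const, Finset.card_univ, smul_eq_mul]

variable [TopologicalSpace A] [TopologicalSpace B]
variable {X : Set (ℤ → A)} {Y : Set (ℤ → B)}

/-- Generic counting estimate. -/
lemma generic_count [Fintype A] [Fintype B] (D : CD X Y)
    (CY : ℕ → Set (List B)) (CX : ℕ → Set (List A))
    (hlenX : ∀ m, ∀ w ∈ CX m, w.length = m)
    (hlenY : ∀ n, ∀ v ∈ CY n, v.length = n)
    (H : ∀ n, 4 * D.r + 4 ≤ n → ∀ v ∈ CY n, ∃ ys, ys ∈ Y ∧ RAt ys v 0 ∧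
      ∃ j, 1 ≤ j ∧ j ≤ 2 * D.r + 1 ∧
        wordOf (pastOf D ys) (n - 2 - 2 * D.r + j) ∈ CX (n - (2 * D.r + 1) + j)) :
    ∀ n, 4 * D.r + 4 ≤ n → ∃ m, n - (2 * D.r + 1) ≤ m ∧ m ≤ n ∧
      Nat.card ↥(CY n) ≤ ((2 * D.r + 2) * (Fintype.card B + 1) ^ (4 * D.r + 2)) * Nat.card ↥(CX m) := by
  intro n hn
  classical
  set r := D.r with hr
  -- the maximizing length
  set F : Fin (2 * r + 2) → ℕ := fun t => Nat.card ↥(CX (n - (2 * r + 1) + (t : ℕ))) with hF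
  obtain ⟨tm, _, htm⟩ := Finset.exists_max_image Finset.univ F ⟨0, Finset.mem_univ 0⟩
  refine ⟨n - (2 * r + 1) + (tm : ℕ), by omega, by have := tm.2; omega, ?_⟩
  -- choose the data
  have Hc : ∀ v : ↥(CY n), ∃ ys, ys ∈ Y ∧ RAt ys (v : List B) 0 ∧
      ∃ j, 1 ≤ j ∧ j ≤ 2 * r + 1 ∧
        wordOf (pastOf D ys) (n - 2 - 2 * r + j) ∈ CX (n - (2 * r + 1) + j) :=
    fun v => H n hn v.1 v.2
  choose ys hys hra j hj1 hj2 hmem using Hc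
  -- the encoding
  haveI : ∀ t : Fin (2 * r + 2), Finite ↥(CX (n - (2 * r + 1) + (t : ℕ))) :=
    fun t => finite_words (hlenX _)
  set T := (Σ t : Fin (2 * r + 2), ↥(CX (n - (2 * r + 1) + (t : ℕ)))) ×
    ((Fin (2 * r + 1) → Option B) × (Fin (2 * r + 1) → Option B)) with hT
  set e : ↥(CY n) → T := fun v =>
    (⟨⟨j v, by have := hj2 v; omega⟩, ⟨wordOf (pastOf D (ys v)) (n - 2 - 2 * r + j v), hmem v⟩⟩,
      fun i : Fin (2 * r + 1) => (v : List B)[(i : ℕ)]?,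
      fun i : Fin (2 * r + 1) => (v : List B)[n - 1 - (i : ℕ)]?) with he
  have einj : Function.Injective e := by
    intro v v' hvv
    have hlv : (v : List B).length = n := hlenY n v.1 v.2
    have hlv' : (v' : List B).length = n := hlenY n v'.1 v'.2
    rw [he] at hvv
    have h1 := congrArg Prod.fst hvv
    have h2 := congrArg (fun p : T => p.2.1) hvv
    have h3 := congrArg (fun p : T => p.2.2) hvv
    simp only at h1 h2 h3
    -- extract the word equality
    have hWeq : wordOf (pastOf D (ys v)) (n - 2 - 2 * r + j v)
        = wordOf (pastOf D (ys v')) (n - 2 - 2 * r + j v') := by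
      have := congrArg (fun s : (Σ t : Fin (2 * r + 2), ↥(CX (n - (2 * r + 1) + (t : ℕ)))) =>
        (s.2 : List A)) h1
      exact this
    have hjeq : j v = j v' := by
      have := congrArg List.length hWeq
      rw [wordOf_length, wordOf_length] at this
      omega
    rw [← hjeq] at hWeq
    -- conclude letterwise
    apply Subtype.ext
    apply List.ext_getElem?
    intro i
    rcases lt_or_ge i n with hin | hin
    swap
    · rw [List.getElem?_eq_none (by omega), List.getElem?_eq_none (by omega)]
    rcases le_or_gt i (2 * r) with hsm | hmid
    · exact congrFun h2 ⟨i, by omega⟩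
    rcases le_or_gt (n - 1 - 2 * r) i with hlg | hmid2
    · have := congrFun h3 ⟨n - 1 - i, by omega⟩
      simp only at this
      have hii : n - 1 - (n - 1 - i) = i := by omega
      rwa [hii] at this
    -- middle: use determination
    · set k : ℕ := n - 1 - i with hk
      have hdet := det D hlv hlv' (hys v) (hra v) (hys v') (hra v') hWeq k
        (by omega) (by omega) (by omega) (by omega)
      have hik : n - 1 - k = i := by omega
      rw [hik] at hdet
      exact hdet
  -- cardinality count
  have hcard1 : Nat.card ↥(CY n) ≤ Nat.card T := Nat.card_le_card_of_injective e einj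
  have hcard2 : Nat.card T = Nat.card (Σ t : Fin (2 * r + 2), ↥(CX (n - (2 * r + 1) + (t : ℕ))))
      * ((Fintype.card B + 1) ^ (2 * r + 1) * (Fintype.card B + 1) ^ (2 * r + 1)) := by
    rw [hT, Nat.card_prod, Nat.card_prod]
    congr 1
    congr 1 <;>
    · rw [Nat.card_fun, Nat.card_eq_fintype_card (α := Option B), Fintype.card_option,
        Nat.card_eq_fintype_card (α := Fin (2 * r + 1)), Fintype.card_fin]
  have hcard3 : Nat.card (Σ t : Fin (2 * r + 2), ↥(CX (n - (2 * r + 1) + (t : ℕ))))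
      ≤ (2 * r + 2) * F tm := by
    have := card_sigma_le (fun t : Fin (2 * r + 2) => ↥(CX (n - (2 * r + 1) + (t : ℕ))))
      (F tm) (fun t => htm t (Finset.mem_univ t))
    rwa [Fintype.card_fin] at this
  calc Nat.card ↥(CY n) ≤ Nat.card T := hcard1
  _ = Nat.card (Σ t : Fin (2 * r + 2), ↥(CX (n - (2 * r + 1) + (t : ℕ))))
      * ((Fintype.card B + 1) ^ (2 * r + 1) * (Fintype.card B + 1) ^ (2 * r + 1)) := hcard2
  _ ≤ ((2 * r + 2) * F tm)
      * ((Fintype.card B + 1) ^ (2 * r + 1) * (Fintype.card B + 1) ^ (2 * r + 1)) := by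
      exact Nat.mul_le_mul_right _ hcard3
  _ = ((2 * r + 2) * (Fintype.card B + 1) ^ (4 * r + 2)) * F tm := by
      rw [← pow_add]
      have h9 : 2 * r + 1 + (2 * r + 1) = 4 * r + 2 := by omega
      rw [h9]
      ring
  _ = ((2 * r + 2) * (Fintype.card B + 1) ^ (4 * r + 2))
      * Nat.card ↥(CX (n - (2 * r + 1) + (tm : ℕ))) := rfl

end Counting

section Limsup

lemma real_le_of_forall_pos_le_add {a b : ℝ} (h : ∀ ε : ℝ, 0 < ε → a ≤ b + ε) : a ≤ b := by
  by_contra hlt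
  push_neg at hlt
  have := h ((a - b) / 2) (by linarith)
  linarith

/-- Key analytic lemma: window-comparison of counting sequences gives
comparison of exponential growth rates. -/
lemma key_limsup (cY cX : ℕ → ℕ) (K w N0 : ℕ) (hK : 1 ≤ K) (hN0 : w + 1 ≤ N0) (cA : ℕ)
    (hbound : ∀ m, cX m ≤ (cA + 1) ^ m)
    (h : ∀ n, N0 ≤ n → ∃ m, n - w ≤ m ∧ m ≤ n ∧ cY n ≤ K * cX m) :
    limsup (fun n : ℕ => max 0 (Real.log (cY n)) / (n : ℝ)) atTop ≤
      limsup (fun n : ℕ => max 0 (Real.log (cX n)) / (n : ℝ)) atTop := by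
  set a : ℕ → ℝ := fun n => max 0 (Real.log (cY n)) / (n : ℝ) with ha
  set b : ℕ → ℝ := fun n => max 0 (Real.log (cX n)) / (n : ℝ) with hb
  have ha0 : ∀ n, 0 ≤ a n := fun n => div_nonneg (le_max_left _ _) (Nat.cast_nonneg n)
  have hb0 : ∀ n, 0 ≤ b n := fun n => div_nonneg (le_max_left _ _) (Nat.cast_nonneg n)
  have hlogA : (0 : ℝ) ≤ Real.log (cA + 1) := by
    apply Real.log_nonneg
    have h8 : (0 : ℝ) ≤ (cA : ℝ) := Nat.cast_nonneg cA
    linarith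
  have hbM : ∀ n, b n ≤ Real.log (cA + 1) := by
    intro n
    rcases Nat.eq_zero_or_pos n with h0 | hpos
    · rw [hb]
      simp only [h0, Nat.cast_zero, div_zero]
      exact hlogA
    · have h1 : max 0 (Real.log (cX n)) ≤ (n : ℝ) * Real.log (cA + 1) := by
        apply max_le
        · positivity
        · rcases Nat.eq_zero_or_pos (cX n) with hc | hc
          · rw [hc]
            simp only [Nat.cast_zero, Real.log_zero]
            positivity
          · have hc2 : (cX n : ℝ) ≤ ((cA : ℝ) + 1) ^ n := by
              have := hbound n
              have h3 : ((cX n : ℕ) : ℝ) ≤ (((cA + 1) ^ n : ℕ) : ℝ) := Nat.cast_le.2 this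
              rwa [Nat.cast_pow, Nat.cast_add, Nat.cast_one] at h3
            calc Real.log (cX n) ≤ Real.log (((cA : ℝ) + 1) ^ n) :=
                  Real.log_le_log (by exact_mod_cast hc) hc2
            _ = (n : ℝ) * Real.log ((cA : ℝ) + 1) := Real.log_pow ((cA : ℝ) + 1) n
      rw [hb]
      rw [div_le_iff₀ (by exact_mod_cast hpos)]
      calc max 0 (Real.log (cX n)) ≤ (n : ℝ) * Real.log (cA + 1) := h1
      _ = Real.log ((cA : ℝ) + 1) * n := by ring
  have hbdd : IsBoundedUnder (· ≤ ·) atTop b := ⟨Real.log (cA + 1), by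
    rw [eventually_map]
    exact Eventually.of_forall hbM⟩
  have hcobdd : IsCoboundedUnder (· ≤ ·) atTop a := isCoboundedUnder_le_of_le atTop ha0
  set L := limsup b atTop with hL
  have hL0 : 0 ≤ L := le_limsup_of_frequently_le (Frequently.of_forall hb0) hbdd
  apply real_le_of_forall_pos_le_add
  intro ε hε
  have hev : ∀ᶠ m in atTop, b m < L + ε / 2 := eventually_lt_of_limsup_lt (by linarith) hbdd
  rw [eventually_atTop] at hev
  obtain ⟨M1, hM1⟩ := hev
  obtain ⟨N2, hN2⟩ := exists_nat_gt (2 * Real.log K / ε)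
  apply limsup_le_of_le hcobdd
  rw [eventually_atTop]
  refine ⟨N0 + (M1 + w) + (N2 + 1), fun n hn => ?_⟩
  have hnN0 : N0 ≤ n := by omega
  have hnM1 : M1 + w ≤ n := by omega
  have hnN2 : N2 + 1 ≤ n := by omega
  obtain ⟨m, hm1, hm2, hcle⟩ := h n hnN0
  have hmM1 : M1 ≤ m := by omega
  have hbm : b m < L + ε / 2 := hM1 m hmM1
  have hlogK : (0 : ℝ) ≤ Real.log K := Real.log_natCast_nonneg K
  have hnpos : (0 : ℝ) < (n : ℝ) := by exact_mod_cast (by omega : 0 < n)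
  have hlogKn : Real.log K / (n : ℝ) ≤ ε / 2 := by
    rw [div_le_div_iff₀ hnpos (by norm_num : (0:ℝ) < 2)]
    have h4 : 2 * Real.log K / ε < (N2 : ℝ) := hN2
    have h5 : (N2 : ℝ) ≤ (n : ℝ) := by exact_mod_cast (by omega : N2 ≤ n)
    have h6 : 2 * Real.log K / ε < (n : ℝ) := lt_of_lt_of_le h4 h5
    have h7 : 2 * Real.log K < (n : ℝ) * ε := by
      rw [div_lt_iff₀ hε] at h6
      linarith
    linarith
  rcases Nat.eq_zero_or_pos (cY n) with h0 | hpos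
  · have haz : a n = 0 := by
      rw [ha]
      simp only [h0, Nat.cast_zero, Real.log_zero, max_self, zero_div]
    rw [haz]
    linarith
  · have hXpos : 0 < cX m := by
      rcases Nat.eq_zero_or_pos (cX m) with h' | h'
      · rw [h', Nat.mul_zero] at hcle; omega
      · exact h'
    have hstep1 : Real.log (cY n) ≤ Real.log K + Real.log (cX m) := by
      have hcast : (cY n : ℝ) ≤ (K : ℝ) * (cX m : ℝ) := by exact_mod_cast hcle
      calc Real.log (cY n) ≤ Real.log ((K : ℝ) * (cX m)) :=
            Real.log_le_log (by exact_mod_cast hpos) hcast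
      _ = Real.log K + Real.log (cX m) := by
            have hK0 : ((K : ℝ)) ≠ 0 := by
              have : (0:ℝ) < (K:ℝ) := by exact_mod_cast (by omega : 0 < K)
              exact this.ne'
            have hX0 : ((cX m : ℕ) : ℝ) ≠ 0 := by
              have : (0:ℝ) < ((cX m : ℕ):ℝ) := by exact_mod_cast hXpos
              exact this.ne'
            exact Real.log_mul hK0 hX0
    have hmpos : (0 : ℝ) < (m : ℝ) := by exact_mod_cast (by omega : 0 < m)
    have han : a n ≤ Real.log K / (n : ℝ) + b m := by
      have h1 : max 0 (Real.log (cY n)) ≤ Real.log K + max 0 (Real.log (cX m)) := by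
        apply max_le
        · have := le_max_left (0:ℝ) (Real.log (cX m)); linarith
        · have := le_max_right (0:ℝ) (Real.log (cX m)); linarith
      calc a n = max 0 (Real.log (cY n)) / (n : ℝ) := rfl
      _ ≤ (Real.log K + max 0 (Real.log (cX m))) / (n : ℝ) := by
          exact (div_le_div_iff_of_pos_right hnpos).2 h1
      _ = Real.log K / (n : ℝ) + max 0 (Real.log (cX m)) / (n : ℝ) := add_div _ _ _
      _ ≤ Real.log K / (n : ℝ) + max 0 (Real.log (cX m)) / (m : ℝ) := by
          have := div_le_div_of_nonneg_left (le_max_left (0:ℝ) (Real.log (cX m))) hmpos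
            (by exact_mod_cast hm2 : (m : ℝ) ≤ (n : ℝ))
          linarith
      _ = Real.log K / (n : ℝ) + b m := rfl
    linarith

end Limsup

section Hyps

variable [TopologicalSpace A] [TopologicalSpace B]
variable {X : Set (ℤ → A)} {Y : Set (ℤ → B)}

/-- Verification of the counting hypothesis for left constraints. -/
lemma H_LC (hX : IsSubshift X) (hY : IsSubshift Y) (D : CD X Y) :
    ∀ n, 4 * D.r + 4 ≤ n → ∀ v ∈ LC Y n, ∃ ys, ys ∈ Y ∧ RAt ys v 0 ∧
      ∃ j, 1 ≤ j ∧ j ≤ 2 * D.r + 1 ∧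
        wordOf (pastOf D ys) (n - 2 - 2 * D.r + j) ∈ LC X (n - (2 * D.r + 1) + j) := by
  intro n hn v hv
  obtain ⟨hvl, hcon⟩ := hv
  obtain ⟨⟨ys, hys, hra⟩, ⟨yh, hyh, hrat, hnot⟩⟩ := constraint_data hY hcon
  obtain ⟨j, hj1, hj2, hW⟩ := core hX hY D hn hvl hys hra hyh hrat hnot
  exact ⟨ys, hys, hra, j, hj1, hj2, ⟨by rw [wordOf_length]; omega, hW⟩⟩

/-- A point of a subshift with a prescribed past, by compactness. -/
lemma past_point [Finite B] [DiscreteTopology B] (hY : IsSubshift Y) {b : ℕ → B}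
    (hb : ∀ N : ℕ, ∃ m, N ≤ m ∧ ∃ y ∈ Y, RAt y (wordOf b m) 0) :
    ∃ ys ∈ Y, ∀ k : ℕ, ys (-(k : ℤ)) = b k := by
  set C : ℕ → Set (ℤ → B) := fun m => {y | y ∈ Y ∧ ∀ k : ℕ, k ≤ m → y (-(k : ℤ)) = b k}
    with hCdef
  have hdec : ∀ m, C (m + 1) ⊆ C m := fun m y hy => ⟨hy.1, fun k hk => hy.2 k (by omega)⟩
  have hne : ∀ m, (C m).Nonempty := by
    intro m
    obtain ⟨m', hm', y, hyY, hra⟩ := hb m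
    refine ⟨y, hyY, fun k hk => ?_⟩
    have := RAt_wordOf.1 hra k (by omega)
    rw [← this]
    congr 1
    omega
  have hcl : ∀ m, IsClosed (C m) := by
    intro m
    have heq : C m = Y ∩ ⋂ k ∈ Finset.range (m + 1),
        (fun y : ℤ → B => y (-(k : ℤ))) ⁻¹' {b k} := by
      ext y
      simp only [hCdef, Set.mem_setOf_eq, Set.mem_inter_iff, Set.mem_iInter,
        Set.mem_preimage, Set.mem_singleton_iff, Finset.mem_range]
      constructor
      · rintro ⟨h1, h2⟩; exact ⟨h1, fun k hk => h2 k (by omega)⟩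
      · rintro ⟨h1, h2⟩; exact ⟨h1, fun k hk => h2 k (by omega)⟩
    rw [heq]
    apply hY.1.inter
    apply isClosed_biInter
    intro k _
    exact IsClosed.preimage (continuous_apply _) isClosed_singleton
  have hint := IsCompact.nonempty_iInter_of_sequence_nonempty_isCompact_isClosed C hdec hne
    ((hcl 0).isCompact) hcl
  obtain ⟨y, hy⟩ := hint
  rw [Set.mem_iInter] at hy
  exact ⟨y, (hy 0).1, fun k => (hy k).2 k le_rfl⟩

/-- Verification of the counting hypothesis for extendable left constraints. -/
lemma H_ELC [Finite B] [DiscreteTopology B] (hX : IsSubshift X) (hY : IsSubshift Y)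
    (D : CD X Y) :
    ∀ n, 4 * D.r + 4 ≤ n → ∀ v ∈ ELC Y n, ∃ ys, ys ∈ Y ∧ RAt ys v 0 ∧
      ∃ j, 1 ≤ j ∧ j ≤ 2 * D.r + 1 ∧
        wordOf (pastOf D ys) (n - 2 - 2 * D.r + j) ∈ ELC X (n - (2 * D.r + 1) + j) := by
  intro n hn v hv
  obtain ⟨hvl, hconv, b, hbw, hbinf⟩ := hv
  have hb : ∀ N : ℕ, ∃ m, N ≤ m ∧ ∃ y ∈ Y, RAt y (wordOf b m) 0 := by
    intro N
    obtain ⟨m, hm, hcon⟩ := hbinf N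
    obtain ⟨⟨y, hy, hra⟩, _⟩ := constraint_data hY hcon
    exact ⟨m, hm, y, hy, hra⟩
  obtain ⟨ys, hys, hpast⟩ := past_point hY hb
  have hveq : v = wordOf b (n - 1) := by
    conv_lhs => rw [← hbw]
    rw [hvl]
  have hra : RAt ys v 0 := by
    rw [hveq, RAt_wordOf]
    intro k hk
    rw [← hpast k]
    congr 1
    omega
  obtain ⟨_, ⟨yh, hyh, hrat, hnot⟩⟩ := constraint_data hY hconv
  obtain ⟨j, hj1, hj2, hW⟩ := core hX hY D hn hvl hys hra hyh hrat hnot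
  refine ⟨ys, hys, hra, j, hj1, hj2, ⟨by rw [wordOf_length]; omega, hW, pastOf D ys, ?_, ?_⟩⟩
  · rw [wordOf_length]
    rw [Nat.add_sub_cancel]
  · intro N
    obtain ⟨m, hm, hconm⟩ := hbinf (N + 2 * D.r + 2 + n)
    have hm4 : 4 * D.r + 4 ≤ m + 1 := by omega
    have hvml : (wordOf b m).length = m + 1 := wordOf_length b m
    have hram : RAt ys (wordOf b m) 0 := by
      rw [RAt_wordOf]
      intro k hk
      rw [← hpast k]
      congr 1
      omega
    obtain ⟨_, ⟨yhm, hyhm, hratm, hnotm⟩⟩ := constraint_data hY hconm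
    obtain ⟨j', hj1', hj2', hW'⟩ := core hX hY D hm4 hvml hys hram hyhm hratm hnotm
    exact ⟨(m + 1) - 2 - 2 * D.r + j', by omega, hW'⟩

end Hyps

section Empty

variable [TopologicalSpace A]

lemma fol_empty (w : List A) : fol (∅ : Set (ℤ → A)) w = ∅ := by
  ext y
  simp [fol]

lemma LC_empty (n : ℕ) : LC (∅ : Set (ℤ → A)) n = ∅ := by
  ext w
  simp only [LC, Set.mem_setOf_eq, Set.mem_empty_iff_false, iff_false, not_and]
  intro _
  rintro ⟨_, hne, _⟩
  exact hne (fol_empty w)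

lemma ELC_empty (n : ℕ) : ELC (∅ : Set (ℤ → A)) n = ∅ := by
  ext w
  simp only [ELC, Set.mem_setOf_eq, Set.mem_empty_iff_false, iff_false, not_and]
  intro _
  rintro ⟨⟨_, hne, _⟩, _⟩
  exact hne (fol_empty w)

lemma hC_empty : hC (∅ : Set (ℤ → A)) = 0 := by
  unfold hC
  have : (fun n : ℕ => max 0 (Real.log (Nat.card ↥(LC (∅ : Set (ℤ → A)) n))) / (n : ℝ))
      = fun _ : ℕ => (0 : ℝ) := by
    funext n
    rw [LC_empty]
    simp
  rw [this]
  exact limsup_const 0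

lemma hCstar_empty : hCstar (∅ : Set (ℤ → A)) = 0 := by
  unfold hCstar
  have : (fun n : ℕ => Real.log (Nat.card ↥(ELC (∅ : Set (ℤ → A)) n)) / (n : ℝ))
      = fun _ : ℕ => (0 : ℝ) := by
    funext n
    rw [ELC_empty]
    simp
  rw [this]
  exact limsup_const 0

lemma hCstar_eq_max_form (X : Set (ℤ → A)) :
    hCstar X = limsup (fun n : ℕ =>
      max 0 (Real.log (Nat.card ↥(ELC X n))) / (n : ℝ)) atTop := by
  unfold hCstar
  congr 1
  funext n
  congr 1
  exact (max_eq_right (Real.log_natCast_nonneg _)).symm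

end Empty

section MainLe

variable [TopologicalSpace A] [TopologicalSpace B]

/-- Main inequality: conjugacy pushes constraint entropies down one way. -/
lemma main_le [Fintype A] [Fintype B] [DiscreteTopology A] [DiscreteTopology B]
    {X : Set (ℤ → A)} {Y : Set (ℤ → B)}
    (hX : IsSubshift X) (hY : IsSubshift Y) (h : Conjugate X Y) :
    hC Y ≤ hC X ∧ hCstar Y ≤ hCstar X := by
  rcases Set.eq_empty_or_nonempty X with hXe | hXne
  · have hYe : Y = ∅ := by
      rcases Set.eq_empty_or_nonempty Y with hYe | ⟨y, hy⟩
      · exact hYe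
      · exfalso
        obtain ⟨φ, _⟩ := h
        exact Set.eq_empty_iff_forall_notMem.1 hXe _ (φ.symm ⟨y, hy⟩).2
    rw [hXe, hYe, hC_empty, hC_empty, hCstar_empty, hCstar_empty]
    exact ⟨le_refl _, le_refl _⟩
  obtain ⟨D⟩ := exists_CD hX hY h hXne
  have hK : 1 ≤ (2 * D.r + 2) * (Fintype.card B + 1) ^ (4 * D.r + 2) := by
    have h1 : 0 < (2 * D.r + 2) * (Fintype.card B + 1) ^ (4 * D.r + 2) := by positivity
    omega
  constructor
  · apply key_limsup (fun n => Nat.card ↥(LC Y n)) (fun m => Nat.card ↥(LC X m))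
      ((2 * D.r + 2) * (Fintype.card B + 1) ^ (4 * D.r + 2)) (2 * D.r + 1) (4 * D.r + 4)
      hK (by omega) (Fintype.card A)
    · intro m
      exact card_words_le (fun v hv => hv.1)
    · exact generic_count D (LC Y) (LC X) (fun m w hw => hw.1) (fun n v hv => hv.1)
        (H_LC hX hY D)
  · rw [hCstar_eq_max_form X, hCstar_eq_max_form Y]
    apply key_limsup (fun n => Nat.card ↥(ELC Y n)) (fun m => Nat.card ↥(ELC X m))
      ((2 * D.r + 2) * (Fintype.card B + 1) ^ (4 * D.r + 2)) (2 * D.r + 1) (4 * D.r + 4)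
      hK (by omega) (Fintype.card A)
    · intro m
      exact card_words_le (fun v hv => hv.1)
    · exact generic_count D (ELC Y) (ELC X) (fun m w hw => hw.1) (fun n v hv => hv.1)
        (H_ELC hX hY D)

/-- Conjugacy is symmetric. -/
lemma conj_symm {X : Set (ℤ → A)} {Y : Set (ℤ → B)} (hX : IsSubshift X)
    (h : Conjugate X Y) : Conjugate Y X := by
  obtain ⟨φ, hφ⟩ := h
  refine ⟨φ.symm, ?_⟩
  intro y y' hyy
  set x := φ.symm y with hxdef
  have hsx : shift (x : ℤ → A) ∈ X := shiftZ_one_mem hX x.2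
  have h1 : (φ ⟨shift (x : ℤ → A), hsx⟩ : ℤ → B) = shift (φ x : ℤ → B) :=
    hφ x ⟨shift (x : ℤ → A), hsx⟩ rfl
  have h2 : φ x = y := by rw [hxdef, Homeomorph.apply_symm_apply]
  have h3 : (φ ⟨shift (x : ℤ → A), hsx⟩ : ℤ → B) = (y' : ℤ → B) := by
    rw [h1, h2, ← hyy]
  have h4 : φ ⟨shift (x : ℤ → A), hsx⟩ = y' := Subtype.ext h3
  have h5 : (⟨shift (x : ℤ → A), hsx⟩ : ↥X) = φ.symm y' := by
    rw [← h4, Homeomorph.symm_apply_apply]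
  rw [← h5]

end MainLe

section Rev

/-- time reversal of a sequence -/
def revMap : (ℤ → A) → (ℤ → A) := fun x n => x (-n)

lemma revMap_invol (x : ℤ → A) : revMap (revMap x) = x := by
  funext n
  simp [revMap]

lemma revMap_continuous [TopologicalSpace A] : Continuous (revMap : (ℤ → A) → (ℤ → A)) :=
  continuous_pi fun n => continuous_apply (-n)

lemma rev_eq_image (X : Set (ℤ → A)) : rev X = revMap '' X := rfl

lemma rev_eq_preimage (X : Set (ℤ → A)) : rev X = revMap ⁻¹' X := by
  ext x
  constructor
  · rintro ⟨w, hw, rfl⟩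
    show revMap (revMap w) ∈ X
    rw [revMap_invol]
    exact hw
  · intro hx
    exact ⟨revMap x, hx, revMap_invol x⟩

lemma shift_revMap (x : ℤ → A) : shift (revMap x) = revMap (shiftZ (-1) x) := by
  funext n
  show x (-(n + 1)) = x (-n + -1)
  congr 1
  ring

variable [TopologicalSpace A]

lemma shiftZ_neg_one_image {X : Set (ℤ → A)} (hX : IsSubshift X) :
    shiftZ (-1) '' X = X := by
  ext x
  constructor
  · rintro ⟨w, hw, rfl⟩
    exact shiftZ_mem hX (-1) hw
  · intro hx
    refine ⟨shiftZ 1 x, shiftZ_mem hX 1 hx, ?_⟩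
    rw [shiftZ_shiftZ]
    norm_num
    exact shiftZ_zero x

lemma rev_subshift {X : Set (ℤ → A)} (hX : IsSubshift X) : IsSubshift (rev X) := by
  constructor
  · rw [rev_eq_preimage]
    exact hX.1.preimage revMap_continuous
  · rw [rev_eq_image, ← Set.image_comp]
    have hcomp : (shift ∘ (revMap : (ℤ → A) → (ℤ → A))) = revMap ∘ shiftZ (-1) := by
      funext x
      exact shift_revMap x
    rw [hcomp, Set.image_comp, shiftZ_neg_one_image hX]

lemma mem_rev (X : Set (ℤ → A)) (x : ℤ → A) : x ∈ rev X ↔ revMap x ∈ X := by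
  constructor
  · rintro ⟨w, hw, rfl⟩
    exact (revMap_invol w).symm ▸ hw
  · intro hx
    exact ⟨revMap x, hx, revMap_invol x⟩

/-- the reversal homeomorphism between `rev X` and `X` -/
def revHomeo (X : Set (ℤ → A)) : ↥(rev X) ≃ₜ ↥X where
  toFun x := ⟨revMap (x : ℤ → A), (mem_rev X (x : ℤ → A)).1 x.2⟩
  invFun x := ⟨revMap (x : ℤ → A), ⟨(x : ℤ → A), x.2, rfl⟩⟩
  left_inv x := Subtype.ext (revMap_invol _)
  right_inv x := Subtype.ext (revMap_invol _)
  continuous_toFun := Continuous.subtype_mk (revMap_continuous.comp continuous_subtype_val) _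
  continuous_invFun := Continuous.subtype_mk (revMap_continuous.comp continuous_subtype_val) _

variable [TopologicalSpace B]

lemma conj_rev {X : Set (ℤ → A)} {Y : Set (ℤ → B)} (h : Conjugate X Y) :
    Conjugate (rev X) (rev Y) := by
  obtain ⟨φ, hφ⟩ := h
  refine ⟨(revHomeo X).trans (φ.trans (revHomeo Y).symm), ?_⟩
  intro x x' hxx
  set u := (revHomeo X) x with hu
  set u' := (revHomeo X) x' with hu'
  have huv : (u : ℤ → A) = revMap (x : ℤ → A) := rfl
  have huv' : (u' : ℤ → A) = revMap (x' : ℤ → A) := rfl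
  have hkey : (u : ℤ → A) = shift (u' : ℤ → A) := by
    rw [huv, huv']
    funext n
    show (x : ℤ → A) (-n) = revMap (x' : ℤ → A) (n + 1)
    show (x : ℤ → A) (-n) = (x' : ℤ → A) (-(n + 1))
    rw [hxx]
    show (x : ℤ → A) (-n) = (x : ℤ → A) (-(n + 1) + 1)
    congr 1
    ring
  have hphi : (φ u : ℤ → B) = shift (φ u' : ℤ → B) := hφ u' u hkey
  show (revMap ((φ u') : ℤ → B)) = shift (revMap ((φ u) : ℤ → B))
  funext n
  show (φ u' : ℤ → B) (-n) = revMap ((φ u) : ℤ → B) (n + 1)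
  show (φ u' : ℤ → B) (-n) = (φ u : ℤ → B) (-(n + 1))
  rw [hphi]
  show (φ u' : ℤ → B) (-n) = (φ u' : ℤ → B) (-(n + 1) + 1)
  congr 1
  ring

end Rev


/-- The left constraint entropy, the extendable left
constraint entropy, and their symmetric versions are invariants of topological
conjugacy of subshifts. -/
theorem constraint_entropy_conjugacy_invariant
    {A B : Type*} [Fintype A] [Fintype B]
    [TopologicalSpace A] [TopologicalSpace B]
    [DiscreteTopology A] [DiscreteTopology B]
    (X : Set (ℤ → A)) (Y : Set (ℤ → B))
    (hX : IsSubshift X) (hY : IsSubshift Y) (h : Conjugate X Y) :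
    hC X = hC Y ∧ hCstar X = hCstar Y ∧
    hSC X = hSC Y ∧ hSCstar X = hSCstar Y := by
  have h1 := main_le hX hY h
  have h2 := main_le hY hX (conj_symm hX h)
  have hrc := conj_rev h
  have h3 := main_le (rev_subshift hX) (rev_subshift hY) hrc
  have h4 := main_le (rev_subshift hY) (rev_subshift hX) (conj_symm (rev_subshift hX) hrc)
  have e1 : hC X = hC Y := le_antisymm h2.1 h1.1
  have e2 : hCstar X = hCstar Y := le_antisymm h2.2 h1.2
  have e3 : hC (rev X) = hC (rev Y) := le_antisymm h4.1 h3.1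
  have e4 : hCstar (rev X) = hCstar (rev Y) := le_antisymm h4.2 h3.2
  exact ⟨e1, e2, by unfold hSC; rw [e1, e3], by unfold hSCstar; rw [e2, e4]⟩


end QFTPaper
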